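/- Let $\phi : X^m \to \mathbb{R}$ be a measurable function of $m$ independent random variables such that for every coordinate $i$ and all values, $|\phi(x_1,\ldots,x_i,\ldots,x_m) - \phi(x_1,\ldots,x_i',\ldots,x_m)| \le c_i$ with $\sum_{i=1}^m c_i^2 \le v$. Then for every $t \ge 0$, $\Pr[\phi(X_1,\ldots,X_m) - \mathrm{E}[\phi(X_1,\ldots,X_m)] \ge t] \le e^{-t^2/(2v)}$. -/

import Mathlib

open MeasureTheory Real

lemma aux_integrable {α : Type*} [MeasurableSpace α] {ν : Measure α} [IsFiniteMeasure ν]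
    {f : α → ℝ} (hf : AEStronglyMeasurable f ν) {C : ℝ} (h : ∀ x, |f x| ≤ C) :
    Integrable f ν :=
  ⟨hf, HasFiniteIntegral.of_bounded (C := C)
    (Filter.Eventually.of_forall (by simpa [Real.norm_eq_abs] using h))⟩

lemma aux_exp_chord {c w L : ℝ} (hc : 0 < c) (h1 : -c ≤ w) (h2 : w ≤ c) :
    Real.exp (L * w) ≤ Real.cosh (L * c) + (w / c) * Real.sinh (L * c) := by
  have ha : (0:ℝ) ≤ (c - w) / (2 * c) := div_nonneg (by linarith) (by linarith)
  have hb : (0:ℝ) ≤ (c + w) / (2 * c) := div_nonneg (by linarith) (by linarith)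
  have hab : (c - w) / (2 * c) + (c + w) / (2 * c) = 1 := by field_simp; ring
  have key := convexOn_exp.2 (Set.mem_univ (-(L * c))) (Set.mem_univ (L * c)) ha hb hab
  have e1 : ((c - w) / (2 * c)) • (-(L * c)) + ((c + w) / (2 * c)) • (L * c) = L * w := by
    have : c ≠ 0 := ne_of_gt hc
    field_simp
    ring_nf; rw [show c * L * w * c⁻¹ = L * w * (c * c⁻¹) by ring, mul_inv_cancel₀ this, mul_one]
  rw [e1] at key
  refine key.trans_eq ?_
  have : c ≠ 0 := ne_of_gt hc
  simp only [smul_eq_mul, Real.cosh_eq, Real.sinh_eq]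
  field_simp
  ring

lemma aux_mgf_le {α : Type*} [MeasurableSpace α] (ν : Measure α) [IsProbabilityMeasure ν]
    {W : α → ℝ} (hW : Measurable W) {c : ℝ} (hc : 0 ≤ c)
    (hbdd : ∀ x, |W x| ≤ c) (hmean : ∫ x, W x ∂ν = 0) (L : ℝ) :
    ∫ x, Real.exp (L * W x) ∂ν ≤ Real.exp (L ^ 2 * c ^ 2 / 2) := by
  rcases eq_or_lt_of_le hc with rfl | hc
  · have hW0 : ∀ x, W x = 0 := fun x => abs_nonpos_iff.mp (hbdd x)
    simp only [hW0, mul_zero, Real.exp_zero, integral_const, measure_univ, ENNReal.toReal_one,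
      smul_eq_mul, one_mul]
    simpa using Real.one_le_exp (by positivity)
  · have hWint : Integrable W ν := aux_integrable hW.aestronglyMeasurable hbdd
    have hRHSint : Integrable (fun x => Real.cosh (L * c) + (W x / c) * Real.sinh (L * c)) ν :=
      (integrable_const _).add ((hWint.div_const c).mul_const _)
    have hLHSint : Integrable (fun x => Real.exp (L * W x)) ν := by
      refine aux_integrable ((Real.measurable_exp.comp (hW.const_mul L)).aestronglyMeasurable)
        (C := Real.exp (|L| * c)) fun x => ?_
      rw [abs_of_pos (Real.exp_pos _)]
      apply Real.exp_le_exp.2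
      calc L * W x ≤ |L * W x| := le_abs_self _
        _ = |L| * |W x| := abs_mul _ _
        _ ≤ |L| * c := mul_le_mul_of_nonneg_left (hbdd x) (abs_nonneg L)
    have step : ∫ x, Real.exp (L * W x) ∂ν
        ≤ ∫ x, (Real.cosh (L * c) + (W x / c) * Real.sinh (L * c)) ∂ν := by
      refine integral_mono hLHSint hRHSint fun x => ?_
      exact aux_exp_chord hc (neg_le_of_abs_le (hbdd x)) (le_of_abs_le (hbdd x))
    have val : ∫ x, (Real.cosh (L * c) + (W x / c) * Real.sinh (L * c)) ∂ν
        = Real.cosh (L * c) := by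
      rw [integral_add (integrable_const _) ((hWint.div_const c).mul_const _),
        integral_const, integral_mul_const, integral_div, hmean]
      simp
    rw [val] at step
    refine step.trans ?_
    have := Real.cosh_le_exp_half_sq (L * c)
    refine this.trans_eq ?_
    congr 1
    ring

lemma aux_osc {X : Type*} {m : ℕ} (φ : (Fin m → X) → ℝ) (c : Fin m → ℝ)
    (hdiff : ∀ (x : Fin m → X) (i : Fin m) (x' : X),
      |φ x - φ (Function.update x i x')| ≤ c i) (x y : Fin m → X) :
    |φ x - φ y| ≤ ∑ i, c i := by
  classical
  have key : ∀ s : Finset (Fin m),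
      |φ x - φ (fun i => if i ∈ s then y i else x i)| ≤ ∑ i ∈ s, c i := by
    intro s
    induction s using Finset.induction_on with
    | empty => simp
    | @insert j s hj' ih =>
      have hupd : (fun i => if i ∈ insert j s then y i else x i)
          = Function.update (fun i => if i ∈ s then y i else x i) j (y j) := by
        funext i
        by_cases h : i = j
        · subst h; simp [Function.update]
        · simp [Function.update, h, Finset.mem_insert]
      rw [Finset.sum_insert hj', hupd]
      calc |φ x - φ (Function.update (fun i => if i ∈ s then y i else x i) j (y j))|
          ≤ |φ x - φ (fun i => if i ∈ s then y i else x i)|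
            + |φ (fun i => if i ∈ s then y i else x i)
              - φ (Function.update (fun i => if i ∈ s then y i else x i) j (y j))| := by
            have := abs_sub_le (φ x) (φ (fun i => if i ∈ s then y i else x i))
              (φ (Function.update (fun i => if i ∈ s then y i else x i) j (y j)))
            exact this
        _ ≤ (∑ i ∈ s, c i) + c j := add_le_add ih (hdiff _ j (y j))
        _ = c j + ∑ i ∈ s, c i := by ring
  have := key Finset.univ
  simpa using this

lemma aux_abs_integral_le {α : Type*} [MeasurableSpace α] {ν : Measure α}
    [IsProbabilityMeasure ν] {f : α → ℝ} {C : ℝ} (h : ∀ x, |f x| ≤ C) :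
    |∫ x, f x ∂ν| ≤ C := by
  have := norm_integral_le_of_norm_le_const (μ := ν) (f := f) (C := C)
    (Filter.Eventually.of_forall (by simpa [Real.norm_eq_abs] using h))
  simpa [Real.norm_eq_abs] using this

lemma aux_cov {X : Type*} [MeasurableSpace X] (μ : Measure X) [IsProbabilityMeasure μ] (m : ℕ)
    (f : (Fin (m + 1) → X) → ℝ) (hf : Measurable f) {C : ℝ} (hbdd : ∀ x, |f x| ≤ C) :
    ∫ x, f x ∂(Measure.pi fun _ : Fin (m + 1) => μ)
      = ∫ y, ∫ z, f (Fin.cons z y) ∂μ ∂(Measure.pi fun _ : Fin m => μ) := by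
  have hMP := measurePreserving_piFinSuccAbove (fun _ : Fin (m + 1) => μ) 0
  set e := MeasurableEquiv.piFinSuccAbove (fun _ : Fin (m + 1) => X) 0 with he
  have h3 : ∀ (z : X) (y : Fin m → X), e.symm (z, y) = Fin.cons z y := by
    intro z y
    simp only [he, MeasurableEquiv.piFinSuccAbove_symm_apply, Fin.insertNthEquiv,
      Equiv.coe_fn_mk, Fin.insertNth_zero']
  have h1 : ∫ x, f x ∂(Measure.pi fun _ : Fin (m + 1) => μ)
      = ∫ p, f (e.symm p) ∂(μ.prod (Measure.pi fun _ : Fin m => μ)) := by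
    rw [← hMP.map_eq, integral_map_equiv]
    simp
  have hint : Integrable (fun p : X × (Fin m → X) => f (e.symm p))
      (μ.prod (Measure.pi fun _ : Fin m => μ)) :=
    aux_integrable ((hf.comp e.symm.measurable).aestronglyMeasurable) (fun p => hbdd _)
  rw [h1, integral_prod_symm _ hint]
  simp_rw [h3]

lemma aux_main {X : Type*} [MeasurableSpace X] (μ : Measure X) [IsProbabilityMeasure μ]
    (m : ℕ) :
    ∀ (φ : (Fin m → X) → ℝ), Measurable φ → ∀ (c : Fin m → ℝ),
      (∀ (x : Fin m → X) (i : Fin m) (x' : X),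
        |φ x - φ (Function.update x i x')| ≤ c i) → ∀ L : ℝ,
      ∫ x, Real.exp (L * (φ x - ∫ y, φ y ∂(Measure.pi fun _ : Fin m => μ)))
          ∂(Measure.pi fun _ : Fin m => μ)
        ≤ Real.exp (L ^ 2 * (∑ i, c i ^ 2) / 2) := by
  induction m with
  | zero =>
    intro φ hφ c hdiff L
    have hconst : ∀ x : Fin 0 → X, φ x = φ (fun i => i.elim0) := by
      intro x; congr; funext i; exact i.elim0
    simp only [hconst, integral_const, measure_univ, ENNReal.toReal_one, one_smul, sub_self,
      mul_zero, Real.exp_zero]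
    simp
  | succ m ih =>
    intro φ hφ c hdiff L
    classical
    have hXne : Nonempty X := by
      by_contra h
      rw [not_nonempty_iff] at h
      have h1 : μ Set.univ = 1 := measure_univ
      rw [Set.univ_eq_empty_iff.mpr h, measure_empty] at h1
      exact zero_ne_one h1
    obtain ⟨x₀⟩ := hXne
    have hc0 : ∀ i, 0 ≤ c i :=
      fun i => le_trans (abs_nonneg _) (hdiff (fun _ => x₀) i x₀)
    set B : ℝ := |φ (fun _ => x₀)| + ∑ i, c i with hBdef
    have hB : ∀ x, |φ x| ≤ B := by
      intro x
      have h1 : φ x = (φ x - φ (fun _ => x₀)) + φ (fun _ => x₀) := by ring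
      rw [h1]
      exact (abs_add_le _ _).trans (by
        rw [hBdef, add_comm]
        exact add_le_add le_rfl (aux_osc φ c hdiff x _))
    set E : ℝ := ∫ y, φ y ∂(Measure.pi fun _ : Fin (m + 1) => μ) with hEdef
    set g : (Fin m → X) → ℝ := fun y => ∫ z, φ (Fin.cons z y) ∂μ with hgdef
    have hcons : Measurable fun p : X × (Fin m → X) => (Fin.cons p.1 p.2 : Fin (m + 1) → X) := by
      refine measurable_pi_iff.2 fun j => ?_
      refine Fin.cases ?_ (fun i => ?_) j
      · simp only [Fin.cons_zero]; exact measurable_fst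
      · simp only [Fin.cons_succ]; exact (measurable_pi_apply i).comp measurable_snd
    have hmcons : Measurable fun p : X × (Fin m → X) => φ (Fin.cons p.1 p.2) := hφ.comp hcons
    have hφconsmeas : ∀ y : Fin m → X, Measurable fun z => φ (Fin.cons z y) :=
      fun y => hmcons.comp (measurable_id.prodMk measurable_const)
    have hφconsint : ∀ y : Fin m → X, Integrable (fun z => φ (Fin.cons z y)) μ :=
      fun y => aux_integrable (hφconsmeas y).aestronglyMeasurable (fun z => hB _)
    have hgsm : StronglyMeasurable g := by
      have hf : StronglyMeasurable fun q : (Fin m → X) × X => φ (Fin.cons q.2 q.1) :=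
        (hmcons.comp measurable_swap).stronglyMeasurable
      exact hf.integral_prod_right'
    have hgb : ∀ y, |g y| ≤ B := fun y => aux_abs_integral_le (fun z => hB _)
    have hgdiff : ∀ (y : Fin m → X) (i : Fin m) (x' : X),
        |g y - g (Function.update y i x')| ≤ c i.succ := by
      intro y i x'
      have h1 : g y - g (Function.update y i x')
          = ∫ z, (φ (Fin.cons z y) - φ (Fin.cons z (Function.update y i x'))) ∂μ :=
        (integral_sub (hφconsint y) (hφconsint _)).symm
      rw [h1]
      refine aux_abs_integral_le fun z => ?_
      rw [Fin.cons_update]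
      exact hdiff (Fin.cons z y) i.succ x'
    set CE : ℝ := Real.exp (|L| * (B + |E|)) with hCEdef
    have hexb : ∀ x : Fin (m + 1) → X, |Real.exp (L * (φ x - E))| ≤ CE := by
      intro x
      rw [abs_of_pos (Real.exp_pos _), hCEdef]
      apply Real.exp_le_exp.2
      calc L * (φ x - E) ≤ |L * (φ x - E)| := le_abs_self _
        _ = |L| * |φ x - E| := abs_mul _ _
        _ ≤ |L| * (B + |E|) := mul_le_mul_of_nonneg_left
            ((abs_sub _ _).trans (add_le_add (hB x) le_rfl)) (abs_nonneg L)
    have hmeasexp : Measurable fun x : Fin (m + 1) → X => Real.exp (L * (φ x - E)) :=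
      Real.measurable_exp.comp ((hφ.sub measurable_const).const_mul L)
    have cov := aux_cov μ m (fun x => Real.exp (L * (φ x - E))) hmeasexp hexb
    have hEg : ∫ y, g y ∂(Measure.pi fun _ : Fin m => μ) = E := by
      rw [hEdef, aux_cov μ m φ hφ hB]
    have inner_le : ∀ y, ∫ z, Real.exp (L * (φ (Fin.cons z y) - E)) ∂μ
        ≤ Real.exp (L ^ 2 * c 0 ^ 2 / 2) * Real.exp (L * (g y - E)) := by
      intro y
      have hsplit : ∀ z, Real.exp (L * (φ (Fin.cons z y) - E))
          = Real.exp (L * (g y - E)) * Real.exp (L * (φ (Fin.cons z y) - g y)) := by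
        intro z; rw [← Real.exp_add]; congr 1; ring
      simp_rw [hsplit]
      rw [integral_const_mul, mul_comm (Real.exp (L ^ 2 * c 0 ^ 2 / 2)) _]
      refine mul_le_mul_of_nonneg_left ?_ (Real.exp_pos _).le
      refine aux_mgf_le μ (W := fun z => φ (Fin.cons z y) - g y) ((hφconsmeas y).sub measurable_const) (hc0 0) ?_ ?_ L
      · intro z
        have h1 : φ (Fin.cons z y) - g y
            = ∫ z', (φ (Fin.cons z y) - φ (Fin.cons z' y)) ∂μ := by
          rw [integral_sub (integrable_const _) (hφconsint y), integral_const]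
          simp [hgdef]
        rw [h1]
        refine aux_abs_integral_le fun z' => ?_
        have h2 : Function.update (Fin.cons z y) 0 z' = (Fin.cons z' y : Fin (m+1) → X) :=
          by
            funext j
            induction j using Fin.cases with
            | zero => simp
            | succ i => simp [Function.update, Fin.succ_ne_zero]
        rw [← h2]
        exact hdiff (Fin.cons z y) 0 z'
      · rw [integral_sub (hφconsint y) (integrable_const _), integral_const]
        simp [hgdef]
    have hgexpmeas : Measurable fun y => Real.exp (L * (g y - E)) :=
      Real.measurable_exp.comp ((hgsm.measurable.sub measurable_const).const_mul L)
    have hgexb : ∀ y, |Real.exp (L * (g y - E))| ≤ CE := by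
      intro y
      rw [abs_of_pos (Real.exp_pos _), hCEdef]
      apply Real.exp_le_exp.2
      calc L * (g y - E) ≤ |L * (g y - E)| := le_abs_self _
        _ = |L| * |g y - E| := abs_mul _ _
        _ ≤ |L| * (B + |E|) := mul_le_mul_of_nonneg_left
            ((abs_sub _ _).trans (add_le_add (hgb y) le_rfl)) (abs_nonneg L)
    have outer : ∫ y, (∫ z, Real.exp (L * (φ (Fin.cons z y) - E)) ∂μ)
          ∂(Measure.pi fun _ : Fin m => μ)
        ≤ Real.exp (L ^ 2 * c 0 ^ 2 / 2)
          * ∫ y, Real.exp (L * (g y - E)) ∂(Measure.pi fun _ : Fin m => μ) := by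
      rw [← integral_const_mul]
      refine integral_mono ?_ ?_ inner_le
      · refine aux_integrable ?_ (C := CE) ?_
        · have hf : StronglyMeasurable fun q : (Fin m → X) × X =>
              Real.exp (L * (φ (Fin.cons q.2 q.1) - E)) :=
            (hmeasexp.comp (hcons.comp measurable_swap)).stronglyMeasurable
          exact hf.integral_prod_right'.aestronglyMeasurable
        · intro y
          exact aux_abs_integral_le fun z => hexb _
      · exact ((aux_integrable hgexpmeas.aestronglyMeasurable hgexb).const_mul _)
    have hIH := ih g hgsm.measurable (fun i => c i.succ) hgdiff L
    rw [hEg] at hIH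
    calc ∫ x, Real.exp (L * (φ x - E)) ∂(Measure.pi fun _ : Fin (m + 1) => μ)
        = ∫ y, (∫ z, Real.exp (L * (φ (Fin.cons z y) - E)) ∂μ)
            ∂(Measure.pi fun _ : Fin m => μ) := cov
      _ ≤ Real.exp (L ^ 2 * c 0 ^ 2 / 2)
            * ∫ y, Real.exp (L * (g y - E)) ∂(Measure.pi fun _ : Fin m => μ) := outer
      _ ≤ Real.exp (L ^ 2 * c 0 ^ 2 / 2)
            * Real.exp (L ^ 2 * (∑ i : Fin m, c i.succ ^ 2) / 2) :=
          mul_le_mul_of_nonneg_left hIH (Real.exp_pos _).le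
      _ = Real.exp (L ^ 2 * (∑ i : Fin (m + 1), c i ^ 2) / 2) := by
          rw [← Real.exp_add, Fin.sum_univ_succ]
          congr 1
          ring

/-- One-sided bounded differences (McDiarmid-type) concentration inequality:
if `φ` changes by at most `c i` when only coordinate `i` changes and `∑ i, c i ^ 2 ≤ v`,
then for i.i.d. coordinates the upper deviation of `φ` from its mean exceeds `t`
with probability at most `exp (-t² / (2 v))`. -/
theorem bounded_differences_inequality {X : Type*} [MeasurableSpace X] (m : ℕ)
    (μ : Measure X) [IsProbabilityMeasure μ]
    (φ : (Fin m → X) → ℝ) (hφ : Measurable φ)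
    (c : Fin m → ℝ)
    (hdiff : ∀ (x : Fin m → X) (i : Fin m) (x' : X),
      |φ x - φ (Function.update x i x')| ≤ c i)
    (v : ℝ) (hv : 0 < v) (hc : ∑ i, c i ^ 2 ≤ v)
    (t : ℝ) (ht : 0 ≤ t) :
    (Measure.pi fun _ : Fin m => μ)
        {x | φ x - ∫ y, φ y ∂(Measure.pi fun _ : Fin m => μ) ≥ t}
      ≤ ENNReal.ofReal (exp (-t ^ 2 / (2 * v))) := by
  classical
  set pim : Measure (Fin m → X) := Measure.pi fun _ : Fin m => μ with hpim
  set E : ℝ := ∫ y, φ y ∂pim with hE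
  set lam : ℝ := t / v with hlam
  have hlam0 : 0 ≤ lam := div_nonneg ht hv.le
  have hXne : Nonempty X := by
    by_contra h
    rw [not_nonempty_iff] at h
    have h1 : μ Set.univ = 1 := measure_univ
    rw [Set.univ_eq_empty_iff.mpr h, measure_empty] at h1
    exact zero_ne_one h1
  obtain ⟨x₀⟩ := hXne
  set B : ℝ := |φ (fun _ => x₀)| + ∑ i, c i with hBdef
  have hB : ∀ x, |φ x| ≤ B := by
    intro x
    have h1 : φ x = (φ x - φ (fun _ => x₀)) + φ (fun _ => x₀) := by ring
    rw [h1]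
    exact (abs_add_le _ _).trans (by
      rw [hBdef, add_comm]
      exact add_le_add le_rfl (aux_osc φ c hdiff x _))
  have hmeasexp : Measurable fun x : Fin m → X => Real.exp (lam * (φ x - E)) :=
    Real.measurable_exp.comp ((hφ.sub measurable_const).const_mul lam)
  have hint : Integrable (fun x => Real.exp (lam * (φ x - E))) pim := by
    refine aux_integrable hmeasexp.aestronglyMeasurable
      (C := Real.exp (|lam| * (B + |E|))) fun x => ?_
    rw [abs_of_pos (Real.exp_pos _)]
    apply Real.exp_le_exp.2
    calc lam * (φ x - E) ≤ |lam * (φ x - E)| := le_abs_self _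
      _ = |lam| * |φ x - E| := abs_mul _ _
      _ ≤ |lam| * (B + |E|) := mul_le_mul_of_nonneg_left
          ((abs_sub _ _).trans (add_le_add (hB x) le_rfl)) (abs_nonneg lam)
  have hchern := ProbabilityTheory.measure_ge_le_exp_mul_mgf
    (X := fun x => φ x - E) (μ := pim) (t := lam) t hlam0 hint
  have hmgf := aux_main μ m φ hφ c hdiff lam
  rw [← hpim, ← hE] at hmgf
  have hmgf2 : ProbabilityTheory.mgf (fun x => φ x - E) pim lam
      ≤ Real.exp (lam ^ 2 * v / 2) := by
    have h1 : ProbabilityTheory.mgf (fun x => φ x - E) pim lam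
        = ∫ x, Real.exp (lam * (φ x - E)) ∂pim := rfl
    rw [h1]
    refine hmgf.trans (Real.exp_le_exp.2 ?_)
    nlinarith [sq_nonneg lam]
  have hfinal : (pim {x | t ≤ φ x - E}).toReal ≤ Real.exp (-t ^ 2 / (2 * v)) := by
    refine hchern.trans ?_
    calc Real.exp (-lam * t) * ProbabilityTheory.mgf (fun x => φ x - E) pim lam
        ≤ Real.exp (-lam * t) * Real.exp (lam ^ 2 * v / 2) :=
          mul_le_mul_of_nonneg_left hmgf2 (Real.exp_pos _).le
      _ = Real.exp (-lam * t + lam ^ 2 * v / 2) := (Real.exp_add _ _).symm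
      _ = Real.exp (-t ^ 2 / (2 * v)) := by
          congr 1
          rw [hlam]
          field_simp
          ring
  have hne : pim {x | t ≤ φ x - E} ≠ ⊤ := measure_ne_top _ _
  have := (ENNReal.le_ofReal_iff_toReal_le hne (Real.exp_pos _).le).2 hfinal
  exact this
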